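/- Let λ > 0 and σ² > 0, and let r be a nonnegative real random variable with P(r > t) = exp(−π·λ·t²) for all t ≥ 0 (the nearest-point distance in a homogeneous PPP of density λ). Then E[r²] = 1/(π·λ), the random variable log(1 + r^{−2}/σ²) is integrable, and E[log(1 + r^{−2}/σ²)] ≥ log(1 + π·λ/σ²). -/

import Mathlib

open MeasureTheory
open scoped ENNReal

private lemma php_tangent (σsq m t : ℝ) (hσ : 0 < σsq) (hm : 0 < m) (ht : 0 < t) :
    Real.log (1 + m⁻¹ / σsq) + (m - t) / (m * (σsq * m + 1)) ≤ Real.log (1 + t⁻¹ / σsq) := by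
  have hA : 0 < 1 + t⁻¹ / σsq := by positivity
  have hB : 0 < 1 + m⁻¹ / σsq := by positivity
  have h1 : Real.log ((1 + m⁻¹ / σsq) / (1 + t⁻¹ / σsq)) ≤
      (1 + m⁻¹ / σsq) / (1 + t⁻¹ / σsq) - 1 :=
    Real.log_le_sub_one_of_pos (by positivity)
  rw [Real.log_div hB.ne' hA.ne'] at h1
  have hBA : (1 + m⁻¹ / σsq) / (1 + t⁻¹ / σsq) = (t * (σsq * m + 1)) / (m * (σsq * t + 1)) := by
    rw [div_eq_div_iff hA.ne' (by positivity)]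
    field_simp
  have h2 : 1 - (t * (σsq * m + 1)) / (m * (σsq * t + 1)) =
      (m * (σsq * t + 1) - t * (σsq * m + 1)) / (m * (σsq * t + 1)) := by
    field_simp
  have h3 : (m - t) / (m * (σsq * m + 1)) ≤
      (m * (σsq * t + 1) - t * (σsq * m + 1)) / (m * (σsq * t + 1)) := by
    rw [div_le_div_iff₀ (by positivity) (by positivity)]
    nlinarith [sq_nonneg (m - t), mul_nonneg (mul_nonneg hm.le hσ.le) (sq_nonneg (m - t))]
  rw [hBA] at h1
  linarith

private lemma php_ub (σsq t : ℝ) (hσ : 0 < σsq) (ht : 0 ≤ t) :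
    Real.log (1 + t⁻¹ / σsq) ≤ Real.log (1 + 1 / σsq) + max 0 (-Real.log t) := by
  have hC : 0 ≤ Real.log (1 + 1 / σsq) := Real.log_nonneg (by nlinarith [one_div_pos.mpr hσ])
  rcases eq_or_lt_of_le ht with h0 | h0
  · subst h0
    simpa using hC
  · rcases le_or_gt 1 t with h1 | h1
    · have hti : t⁻¹ ≤ 1 := inv_le_one_of_one_le₀ h1
      have hl : Real.log (1 + t⁻¹ / σsq) ≤ Real.log (1 + 1 / σsq) := by
        apply Real.log_le_log (by positivity)
        have : t⁻¹ / σsq ≤ 1 / σsq := by gcongr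
        linarith
      linarith [le_max_left 0 (-Real.log t)]
    · have hti : 1 ≤ t⁻¹ := (one_le_inv₀ h0).mpr h1.le
      have hmain : 1 + t⁻¹ / σsq ≤ (1 + 1 / σsq) * t⁻¹ := by
        have : (1 + 1 / σsq) * t⁻¹ = t⁻¹ + t⁻¹ / σsq := by ring
        rw [this]; linarith
      have hl := Real.log_le_log (by positivity) hmain
      rw [Real.log_mul (by positivity) (by positivity), Real.log_inv] at hl
      linarith [le_max_right 0 (-Real.log t)]

theorem indoor_mmWave_spectral_efficiency_bound
    {Ω : Type*} [MeasurableSpace Ω] (P : Measure Ω) [IsProbabilityMeasure P]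
    (lam σsq : ℝ) (hlam : 0 < lam) (hσ : 0 < σsq)
    (r : Ω → ℝ) (hmeas : Measurable r) (hr : ∀ ω, 0 ≤ r ω)
    (hdist : ∀ t : ℝ, 0 ≤ t →
      P {ω | t < r ω} = ENNReal.ofReal (Real.exp (-(Real.pi * lam * t ^ 2)))) :
    (∫ ω, (r ω) ^ 2 ∂P = 1 / (Real.pi * lam)) ∧
    Integrable (fun ω => Real.log (1 + ((r ω) ^ 2)⁻¹ / σsq)) P ∧
    ∫ ω, Real.log (1 + ((r ω) ^ 2)⁻¹ / σsq) ∂P ≥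
      Real.log (1 + Real.pi * lam / σsq) := by
  have hc : 0 < Real.pi * lam := by positivity
  set c := Real.pi * lam with hcdef
  -- tail of X = r²
  have hXdist : ∀ t : ℝ, 0 ≤ t →
      P {ω | t < r ω ^ 2} = ENNReal.ofReal (Real.exp (-(c * t))) := by
    intro t ht
    have hset : {ω | t < r ω ^ 2} = {ω | Real.sqrt t < r ω} := by
      ext ω
      simp only [Set.mem_setOf_eq]
      rw [← Real.sqrt_lt_sqrt_iff ht, Real.sqrt_sq (hr ω)]
    rw [hset, hdist _ (Real.sqrt_nonneg t), Real.sq_sqrt ht]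
  have hXmeas : Measurable fun ω => r ω ^ 2 := hmeas.pow_const 2
  have hXnn : ∀ ω, (0:ℝ) ≤ r ω ^ 2 := fun ω => sq_nonneg _
  -- lintegral of X
  have hintexp : IntegrableOn (fun t : ℝ => Real.exp (-(c * t))) (Set.Ioi 0) := by
    simpa [neg_mul] using exp_neg_integrableOn_Ioi 0 hc
  have hexpint : ∫ t in Set.Ioi (0:ℝ), Real.exp (-(c * t)) = 1 / c := by
    have h := integral_comp_mul_left_Ioi (fun x => Real.exp (-x)) 0 hc
    simp only [mul_zero, integral_exp_neg_Ioi, neg_zero, Real.exp_zero, smul_eq_mul,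
      mul_one] at h
    simpa [one_div] using h
  have hlintX : ∫⁻ ω, ENNReal.ofReal (r ω ^ 2) ∂P = ENNReal.ofReal (1 / c) := by
    rw [lintegral_eq_lintegral_meas_lt P (ae_of_all _ hXnn) hXmeas.aemeasurable]
    rw [setLIntegral_congr_fun measurableSet_Ioi
      (fun t (ht : t ∈ Set.Ioi (0:ℝ)) => hXdist t (le_of_lt ht))]
    rw [← ofReal_integral_eq_lintegral_ofReal hintexp
      (ae_of_all _ fun t => (Real.exp_pos _).le), hexpint]
  have hXint : Integrable (fun ω => r ω ^ 2) P := by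
    refine ⟨hXmeas.aestronglyMeasurable, ?_⟩
    rw [hasFiniteIntegral_iff_ofReal (ae_of_all _ hXnn), hlintX]
    exact ENNReal.ofReal_lt_top
  have hEX : ∫ ω, r ω ^ 2 ∂P = 1 / c := by
    rw [integral_eq_lintegral_of_nonneg_ae (ae_of_all _ hXnn) hXmeas.aestronglyMeasurable,
      hlintX, ENNReal.toReal_ofReal (by positivity)]
  -- integrability of Y
  have hYmeas : Measurable fun ω => Real.log (1 + (r ω ^ 2)⁻¹ / σsq) := by
    apply Real.measurable_log.comp
    exact (measurable_const.add ((hXmeas.inv).div_const σsq))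
  have hYnn : ∀ ω, 0 ≤ Real.log (1 + (r ω ^ 2)⁻¹ / σsq) := by
    intro ω
    apply Real.log_nonneg
    have : 0 ≤ (r ω ^ 2)⁻¹ / σsq := by positivity
    linarith
  -- the dominating function g = C + max 0 (-log X)
  have hGmeas : Measurable fun ω => max 0 (-Real.log (r ω ^ 2)) :=
    measurable_const.max (Real.measurable_log.comp hXmeas).neg
  have hGnn : ∀ ω, 0 ≤ max 0 (-Real.log (r ω ^ 2)) := fun ω => le_max_left _ _
  have hGint : Integrable (fun ω => max 0 (-Real.log (r ω ^ 2))) P := by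
    refine ⟨hGmeas.aestronglyMeasurable, ?_⟩
    rw [hasFiniteIntegral_iff_ofReal (ae_of_all _ hGnn)]
    rw [lintegral_eq_lintegral_meas_lt P (ae_of_all _ hGnn) hGmeas.aemeasurable]
    have hbound : ∀ s ∈ Set.Ioi (0:ℝ),
        P {ω | s < max 0 (-Real.log (r ω ^ 2))} ≤ ENNReal.ofReal (c * Real.exp (-s)) := by
      intro s hs
      have hs0 : (0:ℝ) < s := hs
      have hsub : {ω | s < max 0 (-Real.log (r ω ^ 2))} ⊆ {ω | r ω ^ 2 < Real.exp (-s)} := by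
        intro ω hω
        simp only [Set.mem_setOf_eq] at hω ⊢
        have hlt : s < -Real.log (r ω ^ 2) := by
          rcases max_cases 0 (-Real.log (r ω ^ 2)) with ⟨he, _⟩ | ⟨he, _⟩
          · rw [he] at hω; linarith
          · rwa [he] at hω
        by_cases hz : r ω ^ 2 = 0
        · rw [hz]; exact Real.exp_pos _
        · have hxpos : 0 < r ω ^ 2 := lt_of_le_of_ne (hXnn ω) (Ne.symm hz)
          calc r ω ^ 2 = Real.exp (Real.log (r ω ^ 2)) := (Real.exp_log hxpos).symm
            _ < Real.exp (-s) := Real.exp_lt_exp.mpr (by linarith)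
      have h1 : P {ω | r ω ^ 2 < Real.exp (-s)} ≤
          1 - ENNReal.ofReal (Real.exp (-(c * Real.exp (-s)))) := by
        have hcompl : {ω | r ω ^ 2 < Real.exp (-s)} ⊆ {ω | Real.exp (-s) < r ω ^ 2}ᶜ := by
          intro ω hω
          simp only [Set.mem_compl_iff, Set.mem_setOf_eq] at *
          linarith
        calc P {ω | r ω ^ 2 < Real.exp (-s)} ≤ P {ω | Real.exp (-s) < r ω ^ 2}ᶜ :=
              measure_mono hcompl
          _ = 1 - P {ω | Real.exp (-s) < r ω ^ 2} := by
              rw [measure_compl (measurableSet_lt measurable_const hXmeas)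
                (measure_ne_top _ _), measure_univ]
          _ = 1 - ENNReal.ofReal (Real.exp (-(c * Real.exp (-s)))) := by
              rw [hXdist _ (Real.exp_pos _).le]
      have h2 : (1:ℝ≥0∞) - ENNReal.ofReal (Real.exp (-(c * Real.exp (-s)))) ≤
          ENNReal.ofReal (c * Real.exp (-s)) := by
        rw [← ENNReal.ofReal_one, ← ENNReal.ofReal_sub _ (Real.exp_pos _).le]
        apply ENNReal.ofReal_le_ofReal
        have := Real.add_one_le_exp (-(c * Real.exp (-s)))
        linarith
      exact le_trans (le_trans (measure_mono hsub) h1) h2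
    have step1 : ∫⁻ s in Set.Ioi (0:ℝ), P {ω | s < max 0 (-Real.log (r ω ^ 2))} ≤
        ∫⁻ s in Set.Ioi (0:ℝ), ENNReal.ofReal (c * Real.exp (-s)) :=
      setLIntegral_mono' measurableSet_Ioi hbound
    have hexpint' : IntegrableOn (fun s : ℝ => c * Real.exp (-s)) (Set.Ioi 0) := by
      have := (exp_neg_integrableOn_Ioi 0 one_pos).const_mul c
      simpa [IntegrableOn] using this
    have step2 : ∫⁻ s in Set.Ioi (0:ℝ), ENNReal.ofReal (c * Real.exp (-s)) =
        ENNReal.ofReal (∫ s in Set.Ioi (0:ℝ), c * Real.exp (-s)) :=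
      (ofReal_integral_eq_lintegral_ofReal hexpint'
        (ae_of_all _ fun s => by positivity)).symm
    exact lt_of_le_of_lt (step1.trans_eq step2) ENNReal.ofReal_lt_top
  have hYub : ∀ ω, Real.log (1 + (r ω ^ 2)⁻¹ / σsq) ≤
      Real.log (1 + 1 / σsq) + max 0 (-Real.log (r ω ^ 2)) :=
    fun ω => php_ub σsq (r ω ^ 2) hσ (hXnn ω)
  have hYint : Integrable (fun ω => Real.log (1 + (r ω ^ 2)⁻¹ / σsq)) P := by
    apply Integrable.mono' ((integrable_const (Real.log (1 + 1 / σsq))).add hGint)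
      hYmeas.aestronglyMeasurable
    refine ae_of_all _ fun ω => ?_
    rw [Real.norm_eq_abs, abs_of_nonneg (hYnn ω)]
    exact hYub ω
  -- a.e. positivity of X
  have hae : ∀ᵐ ω ∂P, 0 < r ω ^ 2 := by
    have h0 : P {ω | (0:ℝ) < r ω} = 1 := by
      rw [hdist 0 le_rfl]; norm_num
    have hnull : P {ω | (0:ℝ) < r ω}ᶜ = 0 := by
      rw [measure_compl (measurableSet_lt measurable_const hmeas) (measure_ne_top _ _),
        h0, measure_univ, tsub_self]
    have : ∀ᵐ ω ∂P, 0 < r ω := by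
      rw [ae_iff]
      exact hnull
    filter_upwards [this] with ω hω
    positivity
  -- the lower bound via the tangent line at m = 1/c
  set m : ℝ := 1 / c with hmdef
  have hm : 0 < m := by positivity
  have hminv : m⁻¹ = c := by rw [hmdef, one_div, inv_inv]
  have htang : ∀ᵐ ω ∂P, Real.log (1 + c / σsq) + (m - r ω ^ 2) / (m * (σsq * m + 1)) ≤
      Real.log (1 + (r ω ^ 2)⁻¹ / σsq) := by
    filter_upwards [hae] with ω hω
    have := php_tangent σsq m (r ω ^ 2) hσ hm hω
    rwa [hminv] at this
  have hRHSint : Integrable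
      (fun ω => Real.log (1 + c / σsq) + (m - r ω ^ 2) / (m * (σsq * m + 1))) P := by
    apply (integrable_const _).add
    simp_rw [div_eq_mul_inv]
    exact ((integrable_const m).sub hXint).mul_const _
  have hineq := integral_mono_ae hRHSint hYint htang
  rw [integral_add (integrable_const _) (by
      simp_rw [div_eq_mul_inv]
      exact ((integrable_const m).sub hXint).mul_const _),
    integral_const, probReal_univ] at hineq
  simp only [ENNReal.toReal_one, smul_eq_mul, one_mul] at hineq
  have hzero : ∫ ω, (m - r ω ^ 2) / (m * (σsq * m + 1)) ∂P = 0 := by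
    simp_rw [div_eq_mul_inv]
    rw [integral_mul_const _ _, integral_sub (integrable_const m) hXint, integral_const,
      probReal_univ, hEX]
    simp [hmdef]
  rw [hzero, add_zero] at hineq
  exact ⟨hEX, hYint, hineq⟩
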